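/- Let 𝒳 be a set, and let p > 0, τ > 0, c₁ > 0, B > 0. Let (s_j)_{j≥1} be positive reals with s_j ≥ c₁ j^{−1/p} for all j ≥ 1, and let e_j : 𝒳 → ℝ be functions such that for every λ > 0 and every x ∈ 𝒳 the series Σ_{j≥1} (s_j/(s_j+λ)) e_j(x)² converges and satisfies Σ_{j≥1} (s_j/(s_j+λ)) e_j(x)² ≤ B² λ^{−τ}. Then for every integer J ≥ 1 and every x ∈ 𝒳, Σ_{j=1}^J e_j(x)² ≤ 2 c₁^{−τ} B² J^{τ/p}. -/
import Mathlib


/-- bound on partial sums of squared eigenfunctions from the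
effective-dimension-type bound `Σ_j (s_j/(s_j+λ)) e_j(x)² ≤ B² λ^{−τ}`. -/
theorem eigenfunction_partial_sum_bound
    (𝒳 : Type) (p τ c₁ B : ℝ) (hp : 0 < p) (hτ : 0 < τ) (hc₁ : 0 < c₁) (hB : 0 < B)
    (s : ℕ → ℝ) (hspos : ∀ j : ℕ, 1 ≤ j → 0 < s j)
    (hslow : ∀ j : ℕ, 1 ≤ j → c₁ * (j : ℝ) ^ (-(1 / p)) ≤ s j)
    (e : ℕ → 𝒳 → ℝ)
    (hser : ∀ lam : ℝ, 0 < lam → ∀ x : 𝒳,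
      Summable (fun j : {k : ℕ // 1 ≤ k} =>
        s j.1 / (s j.1 + lam) * (e j.1 x) ^ 2) ∧
      (∑' j : {k : ℕ // 1 ≤ k}, s j.1 / (s j.1 + lam) * (e j.1 x) ^ 2)
        ≤ B ^ 2 * lam ^ (-τ)) :
    ∀ J : ℕ, 1 ≤ J → ∀ x : 𝒳,
      (∑ j ∈ Finset.Icc 1 J, (e j x) ^ 2)
        ≤ 2 * c₁ ^ (-τ) * B ^ 2 * (J : ℝ) ^ (τ / p) := by
  intro J hJ x
  set lam : ℝ := c₁ * (J : ℝ) ^ (-(1 / p)) with hlam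
  have hJpos : (0 : ℝ) < (J : ℝ) := by exact_mod_cast hJ
  have hlampos : 0 < lam := mul_pos hc₁ (Real.rpow_pos_of_pos hJpos _)
  obtain ⟨hsum, hbound⟩ := hser lam hlampos x
  -- for j in Icc 1 J, lam ≤ s j
  have hkey : ∀ j ∈ Finset.Icc 1 J, (e j x) ^ 2 ≤ 2 * (s j / (s j + lam) * (e j x) ^ 2) := by
    intro j hj
    rw [Finset.mem_Icc] at hj
    have hj1 : 1 ≤ j := hj.1
    have hjpos : (0 : ℝ) < (j : ℝ) := by exact_mod_cast hj1
    have hmono : (J : ℝ) ^ (-(1 / p)) ≤ (j : ℝ) ^ (-(1 / p)) :=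
      Real.rpow_le_rpow_of_nonpos hjpos (by exact_mod_cast hj.2)
        (by positivity |> neg_nonpos_of_nonneg)
    have hls : lam ≤ s j := le_trans (by
      have := mul_le_mul_of_nonneg_left hmono hc₁.le
      simpa [hlam] using this) (hslow j hj1)
    have hsj := hspos j hj1
    have hden : 0 < s j + lam := by linarith
    have hfrac : (1 : ℝ) / 2 ≤ s j / (s j + lam) := by
      rw [div_le_div_iff₀ (by norm_num) hden]
      linarith
    have hsq : (0 : ℝ) ≤ (e j x) ^ 2 := sq_nonneg _
    nlinarith [mul_le_mul_of_nonneg_right hfrac hsq]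
  calc (∑ j ∈ Finset.Icc 1 J, (e j x) ^ 2)
      ≤ ∑ j ∈ Finset.Icc 1 J, 2 * (s j / (s j + lam) * (e j x) ^ 2) :=
        Finset.sum_le_sum hkey
    _ = 2 * ∑ j ∈ Finset.Icc 1 J, (s j / (s j + lam) * (e j x) ^ 2) := by
        rw [Finset.mul_sum]
    _ ≤ 2 * (B ^ 2 * lam ^ (-τ)) := by
        gcongr 2 * ?_
        refine le_trans ?_ hbound
        have hsub : (∑ j ∈ (Finset.Icc 1 J).subtype (fun k => 1 ≤ k),
            (s j.1 / (s j.1 + lam) * (e j.1 x) ^ 2))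
            = ∑ j ∈ Finset.Icc 1 J, (s j / (s j + lam) * (e j x) ^ 2) := by
          exact Finset.sum_subtype_of_mem (fun j => s j / (s j + lam) * e j x ^ 2)
            (fun j hj => (Finset.mem_Icc.mp hj).1)
        rw [← hsub]
        refine Summable.sum_le_tsum _ (fun j _ => ?_) hsum
        have hsj := hspos j.1 j.2
        have hden : 0 < s j.1 + lam := by linarith
        positivity
    _ = 2 * c₁ ^ (-τ) * B ^ 2 * (J : ℝ) ^ (τ / p) := by
        rw [hlam, Real.mul_rpow hc₁.le (Real.rpow_nonneg hJpos.le _),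
          ← Real.rpow_mul hJpos.le, show -(1 / p) * -τ = τ / p by ring]
        ring
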